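/- arXiv:1608.01671 — 5 statements merged into one kernel-verified Lean document; each statement's English description precedes it below -/
import Mathlib

section
/- For every integer n ≥ 0, the (n+1)st prime number satisfies p_{n+1} = lim_{s→∞} (1 - Q_n(s)/ζ(s))^{-1/s}, where the limit is taken over real s tending to infinity. -/
open Filter Real

noncomputable def zetaR (s : ℝ) : ℝ := ∑' m : ℕ, (m : ℝ) ^ (-s)

/-- `P k` is the (k+1)-st prime: `P 0 = 2`, `P 1 = 3`, ... -/
noncomputable def P (k : ℕ) : ℕ := Nat.nth Nat.Prime k

/-- Partial Euler product `Q n s = ∏_{k=1}^n (1 - p_k^{-s})⁻¹`. -/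
noncomputable def Q (n : ℕ) (s : ℝ) : ℝ := ∏ k ∈ Finset.range n, (1 - (P k : ℝ) ^ (-s))⁻¹

lemma P_prime (k : ℕ) : (P k).Prime :=
  Nat.nth_mem_of_infinite Nat.infinite_setOf_prime k

lemma P_pos (k : ℕ) : (0:ℝ) < (P k : ℝ) := by
  exact_mod_cast (P_prime k).pos

lemma f_summable {s : ℝ} (hs : 1 < s) : Summable (fun m : ℕ => (m:ℝ) ^ (-s)) :=
  Real.summable_nat_rpow.mpr (by linarith)

/-- The completely multiplicative function `m ↦ m^{-s}` as a monoid hom. -/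
noncomputable def fhom (s : ℝ) : ℕ →* ℝ where
  toFun m := (m : ℝ) ^ (-s)
  map_one' := by simp
  map_mul' m k := by
    push_cast
    exact Real.mul_rpow (Nat.cast_nonneg m) (Nat.cast_nonneg k)

lemma primesBelow_P (n : ℕ) : (P n).primesBelow = (Finset.range n).image P := by
  ext q
  simp only [Nat.primesBelow, Finset.mem_filter, Finset.mem_range, Finset.mem_image]
  constructor
  · rintro ⟨hq, hq'⟩
    refine ⟨Nat.count Nat.Prime q, ?_, Nat.nth_count hq'⟩
    by_contra h
    push_neg at h
    have : P n ≤ Nat.nth Nat.Prime (Nat.count Nat.Prime q) :=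
      (Nat.nth_le_nth Nat.infinite_setOf_prime).mpr h
    rw [Nat.nth_count hq'] at this
    omega
  · rintro ⟨k, hk, rfl⟩
    exact ⟨(Nat.nth_lt_nth Nat.infinite_setOf_prime).mpr hk, P_prime k⟩

lemma Q_eq_tsum {s : ℝ} (hs : 1 < s) (n : ℕ) :
    Q n s = ∑' m : (P n).smoothNumbers, ((m : ℕ) : ℝ) ^ (-s) := by
  have h := EulerProduct.prod_primesBelow_geometric_eq_tsum_smoothNumbers
    (f := fhom s) (f_summable hs) (P n)
  have hinj : ∀ a ∈ Finset.range n, ∀ b ∈ Finset.range n, P a = P b → a = b :=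
    fun a _ b _ hab => Nat.nth_injective Nat.infinite_setOf_prime hab
  rw [primesBelow_P, Finset.prod_image hinj] at h
  simpa [Q, fhom] using h

lemma one_le_zetaR {s : ℝ} (hs : 1 < s) : 1 ≤ zetaR s := by
  have h1 : ((1:ℕ):ℝ) ^ (-s) = 1 := by simp
  calc (1:ℝ) = ((1:ℕ):ℝ) ^ (-s) := h1.symm
    _ ≤ zetaR s :=
      Summable.le_tsum (f_summable hs) 1 (fun j _ => Real.rpow_nonneg (Nat.cast_nonneg j) _)

lemma zetaR_le {s : ℝ} (hs : 2 ≤ s) : zetaR s ≤ zetaR 2 := by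
  refine Summable.tsum_le_tsum (fun m => ?_) (f_summable (by linarith)) (f_summable one_lt_two)
  rcases Nat.eq_zero_or_pos m with rfl | hm
  · rw [Nat.cast_zero, Real.zero_rpow (by linarith), Real.zero_rpow (by norm_num)]
  · exact Real.rpow_le_rpow_of_exponent_le (by exact_mod_cast hm) (by linarith)

lemma split_eq {s : ℝ} (hs : 1 < s) (n : ℕ) :
    zetaR s - Q n s = ∑' m : ↑(((P n).smoothNumbers)ᶜ), ((m : ℕ) : ℝ) ^ (-s) := by
  have h := Summable.tsum_subtype_add_tsum_subtype_compl (f_summable hs) ((P n).smoothNumbers)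
  rw [zetaR, Q_eq_tsum hs n, ← h]
  ring

lemma compl_lower {s : ℝ} (hs : 1 < s) (n : ℕ) :
    ((P n : ℝ)) ^ (-s) ≤ ∑' m : ↑(((P n).smoothNumbers)ᶜ), ((m : ℕ) : ℝ) ^ (-s) := by
  have hmem : (P n) ∈ ((P n).smoothNumbers)ᶜ := by
    intro h
    exact absurd (Nat.mem_smoothNumbers'.mp h (P n) (P_prime n) dvd_rfl) (lt_irrefl _)
  exact Summable.le_tsum ((f_summable hs).subtype _) ⟨P n, hmem⟩
    (fun j _ => Real.rpow_nonneg (Nat.cast_nonneg _) _)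

lemma compl_upper {s : ℝ} (hs : 2 ≤ s) (n : ℕ) :
    ∑' m : ↑(((P n).smoothNumbers)ᶜ), ((m : ℕ) : ℝ) ^ (-s)
      ≤ (P n : ℝ) ^ (2 - s) * zetaR 2 := by
  have hs1 : (1:ℝ) < s := by linarith
  have hppos := P_pos n
  set p := P n with hp
  rw [tsum_subtype (((P n).smoothNumbers)ᶜ) (fun m : ℕ => ((m:ℕ):ℝ) ^ (-s))]
  have key : ∀ m : ℕ, (((P n).smoothNumbers)ᶜ).indicator (fun m : ℕ => ((m:ℕ):ℝ) ^ (-s)) m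
      ≤ (p : ℝ) ^ (2 - s) * ((m : ℝ) ^ (-(2:ℝ))) := by
    intro m
    have hnn : (0:ℝ) ≤ (p : ℝ) ^ (2 - s) * ((m : ℝ) ^ (-(2:ℝ))) :=
      mul_nonneg (Real.rpow_nonneg hppos.le _) (Real.rpow_nonneg (Nat.cast_nonneg m) _)
    by_cases hm : m ∈ ((P n).smoothNumbers)ᶜ
    · rw [Set.indicator_of_mem hm]
      rcases Nat.eq_zero_or_pos m with rfl | hm0
      · have hns : -s ≠ 0 := by intro h; rw [neg_eq_zero] at h; linarith
        rw [Nat.cast_zero, Real.zero_rpow hns, Real.zero_rpow (by norm_num : -(2:ℝ) ≠ 0),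
          mul_zero]
      · have hpm : p ≤ m := by
          have := Nat.smoothNumbers_compl (P n) (a := m) ⟨hm, by simpa using hm0.ne'⟩
          exact this
        have hmr : (1:ℝ) ≤ (m : ℝ) := by exact_mod_cast hm0
        have h1 : ((m:ℕ):ℝ) ^ (-s) = (m : ℝ) ^ (2 - s) * (m : ℝ) ^ (-(2:ℝ)) := by
          rw [← Real.rpow_add (by linarith : (0:ℝ) < (m:ℝ))]
          ring_nf
        rw [h1]
        refine mul_le_mul_of_nonneg_right ?_ (Real.rpow_nonneg (Nat.cast_nonneg m) _)
        exact Real.rpow_le_rpow_of_nonpos hppos (by exact_mod_cast hpm)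
          (by linarith)
    · rw [Set.indicator_of_notMem hm]; exact hnn
  have hsum2 : Summable (fun m : ℕ => (p : ℝ) ^ (2 - s) * ((m : ℝ) ^ (-(2:ℝ)))) :=
    (f_summable one_lt_two).mul_left _
  calc ∑' m : ℕ, (((P n).smoothNumbers)ᶜ).indicator (fun m : ℕ => ((m:ℕ):ℝ) ^ (-s)) m
      ≤ ∑' m : ℕ, (p : ℝ) ^ (2 - s) * ((m : ℝ) ^ (-(2:ℝ))) := by
        refine Summable.tsum_le_tsum key ?_ hsum2
        exact (f_summable hs1).indicator _
    _ = (p : ℝ) ^ (2 - s) * zetaR 2 := by rw [tsum_mul_left]; rfl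

lemma aux_tendsto {c p : ℝ} (hc : 0 < c) (hp : 0 < p) :
    Tendsto (fun s : ℝ => (c * p ^ (-s)) ^ (-1 / s)) atTop (nhds p) := by
  have h1 : Tendsto (fun s : ℝ => -1 / s) atTop (nhds 0) := by
    simpa using tendsto_const_nhds.div_atTop (tendsto_id (α := ℝ))
  have h2 : Tendsto (fun s : ℝ => c ^ (-1 / s)) atTop (nhds 1) := by
    have := (Real.continuousAt_const_rpow (b := (0:ℝ)) hc.ne').tendsto.comp h1
    simpa [Function.comp_def] using this
  have h3 : Tendsto (fun s : ℝ => c ^ (-1 / s) * p) atTop (nhds p) := by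
    simpa using h2.mul_const p
  refine h3.congr' ?_
  filter_upwards [eventually_gt_atTop (0:ℝ)] with s hs
  have hps : (0:ℝ) ≤ p ^ (-s) := Real.rpow_nonneg hp.le _
  rw [Real.mul_rpow hc.le hps]
  congr 1
  rw [← Real.rpow_mul hp.le, show -s * (-1 / s) = 1 by field_simp, Real.rpow_one]

theorem golomb_main (n : ℕ) :
    Tendsto (fun s : ℝ => (1 - Q n s / zetaR s) ^ (-1 / s)) atTop (nhds (P n : ℝ)) := by
  set p : ℝ := (P n : ℝ) with hpdef
  have hppos : (0:ℝ) < p := P_pos n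
  have hz2 : (0:ℝ) < zetaR 2 := lt_of_lt_of_le one_pos (one_le_zetaR one_lt_two)
  -- bounds
  have key : ∀ s : ℝ, 2 ≤ s →
      (zetaR 2)⁻¹ * p ^ (-s) ≤ 1 - Q n s / zetaR s ∧
      1 - Q n s / zetaR s ≤ (p ^ (2:ℝ) * zetaR 2) * p ^ (-s) := by
    intro s hs
    have hs1 : (1:ℝ) < s := by linarith
    have hζ1 : (1:ℝ) ≤ zetaR s := one_le_zetaR hs1
    have hζpos : (0:ℝ) < zetaR s := lt_of_lt_of_le one_pos hζ1
    have heq : 1 - Q n s / zetaR s = (zetaR s - Q n s) / zetaR s := by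
      field_simp
    have hlow : p ^ (-s) ≤ zetaR s - Q n s := by
      rw [split_eq hs1 n]; exact compl_lower hs1 n
    have hup : zetaR s - Q n s ≤ p ^ (2 - s) * zetaR 2 := by
      rw [split_eq hs1 n]; exact compl_upper hs n
    constructor
    · rw [heq]
      have hnum : (0:ℝ) ≤ zetaR s - Q n s := le_trans (Real.rpow_nonneg hppos.le _) hlow
      have : p ^ (-s) / zetaR 2 ≤ (zetaR s - Q n s) / zetaR s :=
        div_le_div₀ hnum hlow hζpos (zetaR_le hs)
      calc (zetaR 2)⁻¹ * p ^ (-s) = p ^ (-s) / zetaR 2 := by ring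
        _ ≤ (zetaR s - Q n s) / zetaR s := this
    · rw [heq]
      have h1 : (zetaR s - Q n s) / zetaR s ≤ zetaR s - Q n s :=
        div_le_self (le_trans (Real.rpow_nonneg hppos.le _) hlow) hζ1
      have h2 : p ^ (2 - s) * zetaR 2 = (p ^ (2:ℝ) * zetaR 2) * p ^ (-s) := by
        rw [show (2:ℝ) - s = 2 + (-s) by ring, Real.rpow_add hppos]
        ring
      linarith [hup, h1, h2.le]
  -- squeeze
  have hlo := aux_tendsto (c := (zetaR 2)⁻¹) (inv_pos.mpr hz2) hppos
  have hhi := aux_tendsto (c := p ^ (2:ℝ) * zetaR 2)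
    (mul_pos (Real.rpow_pos_of_pos hppos _) hz2) hppos
  refine tendsto_of_tendsto_of_tendsto_of_le_of_le' hhi hlo ?_ ?_
  · filter_upwards [eventually_ge_atTop (2:ℝ)] with s hs
    have hspos : (0:ℝ) < s := by linarith
    have hb := key s hs
    have hApos : 0 < 1 - Q n s / zetaR s :=
      lt_of_lt_of_le (mul_pos (inv_pos.mpr hz2) (Real.rpow_pos_of_pos hppos _)) hb.1
    exact Real.rpow_le_rpow_of_nonpos hApos hb.2
      (by rw [neg_div]; exact neg_nonpos_of_nonneg (by positivity))
  · filter_upwards [eventually_ge_atTop (2:ℝ)] with s hs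
    have hspos : (0:ℝ) < s := by linarith
    have hb := key s hs
    have hlopos : 0 < (zetaR 2)⁻¹ * p ^ (-s) :=
      mul_pos (inv_pos.mpr hz2) (Real.rpow_pos_of_pos hppos _)
    exact Real.rpow_le_rpow_of_nonpos hlopos hb.1
      (by rw [neg_div]; exact neg_nonpos_of_nonneg (by positivity))
end

section
/- The limit as real s → ∞ of (1 - 1/(ζ(s)(1 - 2^{-s})))^{-1/s} equals 3. -/
open Filter Real

noncomputable def Rtail (s : ℝ) : ℝ := ∑' m : ℕ, ((m : ℝ) + 4) ^ (-s)

noncomputable def Cc : ℝ := ∑' m : ℕ, ((m : ℝ) + 4) ^ (-(2:ℝ))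

lemma summable_shift {s : ℝ} (hs : 1 < s) :
    Summable (fun m : ℕ => ((m : ℝ) + 4) ^ (-s)) := by
  have h : Summable (fun n : ℕ => (n : ℝ) ^ (-s)) :=
    Real.summable_nat_rpow.mpr (by linarith)
  have := h.comp_injective (add_left_injective 4)
  refine this.congr fun m => ?_
  simp [Function.comp]

lemma Rtail_nonneg (s : ℝ) : 0 ≤ Rtail s :=
  tsum_nonneg fun m => Real.rpow_nonneg (by positivity) _

lemma Cc_nonneg : 0 ≤ Cc := Rtail_nonneg 2

lemma zeta_split {s : ℝ} (hs : 1 < s) :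
    zetaR s = 1 + (2:ℝ) ^ (-s) + (3:ℝ) ^ (-s) + Rtail s := by
  have h : Summable (fun n : ℕ => (n : ℝ) ^ (-s)) :=
    Real.summable_nat_rpow.mpr (by linarith)
  have hsplit := Summable.sum_add_tsum_nat_add 4 h
  have hns : -s ≠ 0 := by intro h; rw [neg_eq_zero] at h; rw [h] at hs; linarith
  have h0 : ((0:ℝ)) ^ (-s) = 0 := Real.zero_rpow hns
  have htail : (∑' m : ℕ, ((m + 4 : ℕ) : ℝ) ^ (-s)) = Rtail s := by
    unfold Rtail; congr 1; funext m; push_cast; ring_nf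
  rw [zetaR, ← hsplit, htail]
  rw [Finset.sum_range_succ, Finset.sum_range_succ, Finset.sum_range_succ,
    Finset.sum_range_one]
  norm_num [h0]
  try ring

lemma Rtail_le {s : ℝ} (hs : 2 ≤ s) : Rtail s ≤ 16 * Cc * (4:ℝ) ^ (-s) := by
  have hterm : ∀ m : ℕ, ((m : ℝ) + 4) ^ (-s) ≤ 16 * (4:ℝ) ^ (-s) * ((m : ℝ) + 4) ^ (-(2:ℝ)) := by
    intro m
    have hm4 : (0:ℝ) < (m : ℝ) + 4 := by positivity
    have h1 : ((m : ℝ) + 4) ^ (-s) = ((m : ℝ) + 4) ^ (-(2:ℝ)) * ((m : ℝ) + 4) ^ (2 - s) := by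
      rw [← Real.rpow_add hm4]; ring_nf
    have h2 : ((m : ℝ) + 4) ^ (2 - s) ≤ (4:ℝ) ^ (2 - s) := by
      exact Real.rpow_le_rpow_of_nonpos (by norm_num) (by linarith [Nat.cast_nonneg (α := ℝ) m]) (by linarith)
    have h3 : (4:ℝ) ^ (2 - s) = 16 * (4:ℝ) ^ (-s) := by
      rw [show (2 - s) = 2 + (-s) by ring, Real.rpow_add (by norm_num),
        show (4:ℝ) ^ (2:ℝ) = 16 by
          rw [show (2:ℝ) = ((2:ℕ):ℝ) by norm_num, Real.rpow_natCast]; norm_num]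
    calc ((m : ℝ) + 4) ^ (-s) = ((m : ℝ) + 4) ^ (-(2:ℝ)) * ((m : ℝ) + 4) ^ (2 - s) := h1
      _ ≤ ((m : ℝ) + 4) ^ (-(2:ℝ)) * (4:ℝ) ^ (2 - s) := by
          apply mul_le_mul_of_nonneg_left h2 (Real.rpow_nonneg hm4.le _)
      _ = 16 * (4:ℝ) ^ (-s) * ((m : ℝ) + 4) ^ (-(2:ℝ)) := by rw [h3]; ring
  have hsum2 : Summable (fun m : ℕ => ((m : ℝ) + 4) ^ (-(2:ℝ))) := summable_shift (by norm_num)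
  calc Rtail s ≤ ∑' m : ℕ, 16 * (4:ℝ) ^ (-s) * ((m : ℝ) + 4) ^ (-(2:ℝ)) := by
        exact Summable.tsum_le_tsum hterm (summable_shift (by linarith)) (hsum2.mul_left _)
    _ = 16 * (4:ℝ) ^ (-s) * Cc := by rw [tsum_mul_left]; rfl
    _ = 16 * Cc * (4:ℝ) ^ (-s) := by ring

set_option maxHeartbeats 1000000 in
lemma f_bounds {s : ℝ} (hs2 : 2 ≤ s)
    (ht : ((3:ℝ)/4) ^ s ≤ 1 / (32 * (Cc + 1))) :
    (1/6) * (3:ℝ) ^ (-s) ≤ 1 - 1 / (zetaR s * (1 - (2:ℝ) ^ (-s))) ∧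
      1 - 1 / (zetaR s * (1 - (2:ℝ) ^ (-s))) ≤ 2 * (3:ℝ) ^ (-s) := by
  have hs1 : (1:ℝ) < s := by linarith
  have hs0 : (0:ℝ) < s := by linarith
  set x2 := (2:ℝ) ^ (-s) with hx2
  set x3 := (3:ℝ) ^ (-s) with hx3
  set x4 := (4:ℝ) ^ (-s) with hx4
  set t := ((3:ℝ)/4) ^ s with hT
  set R := Rtail s with hR
  have hx2pos : 0 < x2 := Real.rpow_pos_of_pos (by norm_num) _
  have hx3pos : 0 < x3 := Real.rpow_pos_of_pos (by norm_num) _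
  have hx4pos : 0 < x4 := Real.rpow_pos_of_pos (by norm_num) _
  have htpos : 0 < t := Real.rpow_pos_of_pos (by norm_num) _
  have hx32 : x3 ≤ x2 :=
    Real.rpow_le_rpow_of_nonpos (by norm_num) (by norm_num) (by linarith)
  have hx43 : x4 ≤ x3 :=
    Real.rpow_le_rpow_of_nonpos (by norm_num) (by norm_num) (by linarith)
  have hx3le1 : x3 ≤ 1 :=
    Real.rpow_le_one_of_one_le_of_nonpos (by norm_num) (by linarith)
  have hx22 : x2 * x2 = x4 := by
    rw [hx2, hx4, ← Real.mul_rpow (by norm_num) (by norm_num)]; norm_num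
  have hx4t : x4 = t * x3 := by
    have h4s : (0:ℝ) < (4:ℝ) ^ s := Real.rpow_pos_of_pos (by norm_num) _
    have e1 : t = (3:ℝ) ^ s / (4:ℝ) ^ s := by
      rw [hT, Real.div_rpow] <;> norm_num
    have e2 : (3:ℝ) ^ s * x3 = 1 := by
      rw [hx3, ← Real.rpow_add (by norm_num)]; simp
    have e3 : x4 = ((4:ℝ) ^ s)⁻¹ := by rw [hx4, Real.rpow_neg (by norm_num)]
    calc x4 = ((4:ℝ) ^ s)⁻¹ := e3
      _ = 1 / (4:ℝ) ^ s := (one_div _).symm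
      _ = ((3:ℝ) ^ s * x3) / (4:ℝ) ^ s := by rw [e2]
      _ = t * x3 := by rw [e1]; ring
  have hC1 : (0:ℝ) < 32 * (Cc + 1) := by nlinarith [Cc_nonneg]
  have h32 : 32 * (Cc + 1) * t ≤ 1 := by
    rw [le_div_iff₀ hC1] at ht; linarith
  have h16 : 16 * Cc * t ≤ 1 / 2 := by nlinarith [Cc_nonneg, htpos.le]
  have ht32 : t ≤ 1 / 32 := by nlinarith [Cc_nonneg, htpos.le]
  have hRle : R ≤ 16 * Cc * x4 := Rtail_le hs2
  have hRnn : (0:ℝ) ≤ R := Rtail_nonneg s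
  have hRx3 : R ≤ (1/2) * x3 := by
    have := mul_le_mul_of_nonneg_right h16 hx3pos.le
    calc R ≤ 16 * Cc * x4 := hRle
      _ = 16 * Cc * t * x3 := by rw [hx4t]; ring
      _ ≤ (1/2) * x3 := by nlinarith
  have hEle : x2 + x3 + R ≤ 3 * x2 := by linarith
  have hE : x2 * (x2 + x3 + R) ≤ (1/2) * x3 := by
    have h1 : x2 * (x2 + x3 + R) ≤ x2 * (3 * x2) :=
      mul_le_mul_of_nonneg_left hEle hx2pos.le
    have h2 : x2 * (3 * x2) = 3 * (t * x3) := by rw [← hx4t, ← hx22]; ring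
    have h3 : 3 * (t * x3) ≤ (1/2) * x3 := by
      nlinarith [mul_le_mul_of_nonneg_right ht32 hx3pos.le]
    linarith
  have hEnn : 0 ≤ x2 * (x2 + x3 + R) := by positivity
  have hA : zetaR s * (1 - x2) = 1 + (x3 + R - x2 * (x2 + x3 + R)) := by
    rw [zeta_split hs1]; ring
  set A := zetaR s * (1 - x2) with hAdef
  have hAlow : 1 + (1/2) * x3 ≤ A := by rw [hA]; linarith
  have hAhigh : A ≤ 1 + (3/2) * x3 := by rw [hA]; linarith
  have hApos : 0 < A := by linarith
  have hAle3 : A ≤ 3 := by linarith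
  have hAge1 : 1 ≤ A := by linarith
  have hfA : 1 - 1 / A = (A - 1) / A := by field_simp
  constructor
  · rw [hfA, le_div_iff₀ hApos]
    nlinarith [mul_le_mul_of_nonneg_left hAle3 (by positivity : (0:ℝ) ≤ (1/6) * x3)]
  · rw [hfA, div_le_iff₀ hApos]
    nlinarith [mul_le_mul_of_nonneg_left hAge1 (by positivity : (0:ℝ) ≤ 2 * x3)]

lemma tendsto_aux (c : ℝ) (hc : 0 < c) :
    Tendsto (fun s : ℝ => c ^ (-1/s) * 3) atTop (nhds 3) := by
  have h1 : Tendsto (fun s : ℝ => -1/s) atTop (nhds 0) := by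
    have h := (tendsto_inv_atTop_zero (𝕜 := ℝ)).neg
    simp only [neg_zero] at h
    refine h.congr fun s => ?_
    rw [neg_div, one_div]
  have h2 : Tendsto (fun s : ℝ => c ^ (-1/s)) atTop (nhds 1) := by
    have hc' := (Real.continuousAt_const_rpow (a := c) (b := 0) hc.ne').tendsto
    have h3 := hc'.comp h1
    simpa [Function.comp_def, Real.rpow_zero] using h3
  have := h2.mul (tendsto_const_nhds (x := (3:ℝ)))
  simpa using this

lemma rpow_neg_rpow {s : ℝ} (hs : 0 < s) (c : ℝ) (hc : 0 ≤ c) :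
    ((c:ℝ) ^ (-s)) ^ (-1/s) = c := by
  rw [← Real.rpow_mul hc]
  have : (-s) * (-1/s) = 1 := by field_simp
  rw [this, Real.rpow_one]

theorem second_prime_limit :
    Tendsto (fun s : ℝ => (1 - 1 / (zetaR s * (1 - (2 : ℝ) ^ (-s)))) ^ (-1 / s)) atTop (nhds 3) := by
  have hC1 : (0:ℝ) < 1 / (32 * (Cc + 1)) := by
    have := Cc_nonneg; positivity
  have htev : ∀ᶠ s : ℝ in atTop, ((3:ℝ)/4) ^ s ≤ 1 / (32 * (Cc + 1)) :=
    (tendsto_rpow_atTop_of_base_lt_one (3/4) (by norm_num) (by norm_num)).eventually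
      (eventually_le_nhds hC1)
  refine tendsto_of_tendsto_of_tendsto_of_le_of_le'
    (tendsto_aux 2 (by norm_num)) (tendsto_aux (1/6) (by norm_num)) ?_ ?_
  · filter_upwards [eventually_ge_atTop (2:ℝ), htev] with s hs2 ht
    have hs0 : (0:ℝ) < s := by linarith
    obtain ⟨hf1, hf2⟩ := f_bounds hs2 ht
    have hx3pos : (0:ℝ) < (3:ℝ) ^ (-s) := Real.rpow_pos_of_pos (by norm_num) _
    have hfpos : 0 < 1 - 1 / (zetaR s * (1 - (2:ℝ) ^ (-s))) := by nlinarith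
    have hexp : -1/s ≤ 0 := div_nonpos_of_nonpos_of_nonneg (by norm_num) hs0.le
    have h := Real.rpow_le_rpow_of_nonpos hfpos hf2 hexp
    calc (2:ℝ) ^ (-1/s) * 3
        = (2 * (3:ℝ) ^ (-s)) ^ (-1/s) := by
          rw [Real.mul_rpow (by norm_num) hx3pos.le, rpow_neg_rpow hs0 3 (by norm_num)]
      _ ≤ _ := h
  · filter_upwards [eventually_ge_atTop (2:ℝ), htev] with s hs2 ht
    have hs0 : (0:ℝ) < s := by linarith
    obtain ⟨hf1, hf2⟩ := f_bounds hs2 ht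
    have hx3pos : (0:ℝ) < (3:ℝ) ^ (-s) := Real.rpow_pos_of_pos (by norm_num) _
    have hlowpos : (0:ℝ) < (1/6) * (3:ℝ) ^ (-s) := by positivity
    have hexp : -1/s ≤ 0 := div_nonpos_of_nonpos_of_nonneg (by norm_num) hs0.le
    have h := Real.rpow_le_rpow_of_nonpos hlowpos hf1 hexp
    calc (1 - 1 / (zetaR s * (1 - (2:ℝ) ^ (-s)))) ^ (-1/s)
        ≤ ((1/6) * (3:ℝ) ^ (-s)) ^ (-1/s) := h
      _ = (1/6:ℝ) ^ (-1/s) * 3 := by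
          rw [Real.mul_rpow (by norm_num) hx3pos.le, rpow_neg_rpow hs0 3 (by norm_num)]
end

section
/- For every real a > 0 and integer n ≥ 0, lim_{s→∞} (1 - Q_n(as)/ζ(as))^{-1/s} = p_{n+1}^a, where the limit is over real s → ∞. -/
open Filter Real

namespace GolombAux

noncomputable def g (σ : ℝ) : ℕ →* ℝ where
  toFun m := (m : ℝ) ^ (-σ)
  map_one' := by simp
  map_mul' m k := by
    simp only [Nat.cast_mul]
    exact Real.mul_rpow (Nat.cast_nonneg m) (Nat.cast_nonneg k)

lemma summable_g {σ : ℝ} (hσ : 1 < σ) : Summable (fun m : ℕ => (m : ℝ) ^ (-σ)) :=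
  Real.summable_nat_rpow.mpr (by linarith)

noncomputable def K : ℝ := ∑' m : ℕ, (m : ℝ) ^ (-(2:ℝ))

lemma one_le_K : 1 ≤ K := by
  have h := Summable.le_tsum (summable_g (by norm_num : (1:ℝ) < 2)) 1
    (fun j _ => Real.rpow_nonneg (Nat.cast_nonneg j) _)
  simpa [K] using h

lemma prime_P (n : ℕ) : (P n).Prime := Nat.prime_nth_prime n

lemma primesBelow_P (n : ℕ) : (P n).primesBelow = (Finset.range n).image P := by
  ext q
  simp only [Nat.mem_primesBelow, Finset.mem_image, Finset.mem_range, P]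
  constructor
  · rintro ⟨hlt, hq⟩
    refine ⟨Nat.count Nat.Prime q, ?_, Nat.nth_count hq⟩
    by_contra h
    push_neg at h
    have h2 := (Nat.nth_le_nth Nat.infinite_setOf_prime).mpr h
    rw [Nat.nth_count hq] at h2
    exact absurd hlt (not_lt.mpr h2)
  · rintro ⟨k, hk, rfl⟩
    exact ⟨(Nat.nth_lt_nth Nat.infinite_setOf_prime).mpr hk, prime_P k⟩

lemma P_injective : Function.Injective P :=
  Nat.nth_injective Nat.infinite_setOf_prime

lemma Q_eq_tsum (n : ℕ) {σ : ℝ} (hσ : 1 < σ) :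
    Q n σ = ∑' m : (P n).smoothNumbers, ((m : ℕ) : ℝ) ^ (-σ) := by
  have hsum : Summable ⇑(g σ) := (summable_g hσ).congr (fun m => rfl)
  have h := EulerProduct.prod_primesBelow_geometric_eq_tsum_smoothNumbers (f := g σ) hsum (P n)
  rw [primesBelow_P, Finset.prod_image (fun a _ b _ hab => P_injective hab)] at h
  exact h


lemma sandwich (n : ℕ) {σ : ℝ} (hσ : 2 ≤ σ) :
    (1 ≤ zetaR σ ∧ zetaR σ ≤ K) ∧
    (P n : ℝ) ^ (-σ) ≤ zetaR σ - Q n σ ∧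
    zetaR σ - Q n σ ≤ (P n : ℝ) ^ (2:ℝ) * K * (P n : ℝ) ^ (-σ) := by
  have h1σ : (1:ℝ) < σ := by linarith
  have hsum : Summable (fun m : ℕ => (m : ℝ) ^ (-σ)) := summable_g h1σ
  have hsum2 : Summable (fun m : ℕ => (m : ℝ) ^ (-(2:ℝ))) := summable_g (by norm_num)
  have hnonneg : ∀ m : ℕ, 0 ≤ (m : ℝ) ^ (-σ) := fun m => Real.rpow_nonneg (Nat.cast_nonneg m) _
  have hp0 : (0:ℝ) < (P n : ℝ) := by exact_mod_cast (prime_P n).pos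
  have hpt : ∀ m : ℕ, (m : ℝ) ^ (-σ) ≤ (m : ℝ) ^ (-(2:ℝ)) := by
    intro m
    rcases Nat.eq_zero_or_pos m with rfl | hm
    · simp [Real.zero_rpow (by linarith : -σ ≠ 0), Real.zero_rpow (by norm_num : -(2:ℝ) ≠ 0)]
    · exact Real.rpow_le_rpow_of_exponent_le (by exact_mod_cast hm) (by linarith)
  have hz1 : 1 ≤ zetaR σ := by
    have h := Summable.le_tsum hsum 1 (fun j _ => hnonneg j)
    simpa [zetaR] using h
  have hzK : zetaR σ ≤ K := by
    exact Summable.tsum_le_tsum hpt hsum hsum2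
  have hsplit := Summable.tsum_subtype_add_tsum_subtype_compl hsum ((P n).smoothNumbers)
  have hTe : zetaR σ - Q n σ = ∑' m : ↑((P n).smoothNumbers)ᶜ, ((m : ℕ) : ℝ) ^ (-σ) := by
    rw [Q_eq_tsum n h1σ, zetaR]
    linarith [hsplit]
  have hpmem : (P n) ∈ ((P n).smoothNumbers)ᶜ := by
    intro h
    exact lt_irrefl _ (Nat.mem_smoothNumbers'.mp h _ (prime_P n) dvd_rfl)
  constructor
  · exact ⟨hz1, hzK⟩
  constructor
  · rw [hTe]
    have h := Summable.le_tsum (hsum.subtype _) (⟨P n, hpmem⟩ : ↑((P n).smoothNumbers)ᶜ)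
      (fun j _ => hnonneg _)
    exact h
  · rw [hTe]
    have hb : ∀ m : ↑((P n).smoothNumbers)ᶜ,
        ((m : ℕ) : ℝ) ^ (-σ) ≤ (P n : ℝ) ^ ((2:ℝ) - σ) * ((m : ℕ) : ℝ) ^ (-(2:ℝ)) := by
      rintro ⟨m, hm⟩
      rcases Nat.eq_zero_or_pos m with rfl | hm0
      · simp [Real.zero_rpow (by linarith : -σ ≠ 0), Real.zero_rpow (by norm_num : -(2:ℝ) ≠ 0)]
      · have hple : P n ≤ m := Nat.smoothNumbers_compl (P n) ⟨hm, by simp [hm0.ne']⟩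
        have hple' : (P n : ℝ) ≤ (m : ℝ) := by exact_mod_cast hple
        have hm0' : (0:ℝ) < (m : ℝ) := by exact_mod_cast hm0
        have h1 : ((m : ℕ) : ℝ) ^ (-σ) = (m : ℝ) ^ ((2:ℝ) - σ) * (m : ℝ) ^ (-(2:ℝ)) := by
          rw [← Real.rpow_add hm0']
          ring_nf
        rw [h1]
        have h2 : (m : ℝ) ^ ((2:ℝ) - σ) ≤ (P n : ℝ) ^ ((2:ℝ) - σ) :=
          Real.rpow_le_rpow_of_nonpos hp0 hple' (by linarith)
        exact mul_le_mul_of_nonneg_right h2 (Real.rpow_nonneg (le_of_lt hm0') _)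
    have hs1 : Summable (fun m : ↑((P n).smoothNumbers)ᶜ => ((m : ℕ) : ℝ) ^ (-σ)) :=
      hsum.subtype _
    have hs2 : Summable (fun m : ↑((P n).smoothNumbers)ᶜ =>
        (P n : ℝ) ^ ((2:ℝ) - σ) * ((m : ℕ) : ℝ) ^ (-(2:ℝ))) :=
      (hsum2.subtype _).mul_left _
    calc (∑' m : ↑((P n).smoothNumbers)ᶜ, ((m : ℕ) : ℝ) ^ (-σ))
        ≤ ∑' m : ↑((P n).smoothNumbers)ᶜ,
            (P n : ℝ) ^ ((2:ℝ) - σ) * ((m : ℕ) : ℝ) ^ (-(2:ℝ)) := Summable.tsum_le_tsum hb hs1 hs2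
      _ = (P n : ℝ) ^ ((2:ℝ) - σ) *
            ∑' m : ↑((P n).smoothNumbers)ᶜ, ((m : ℕ) : ℝ) ^ (-(2:ℝ)) := tsum_mul_left
      _ ≤ (P n : ℝ) ^ ((2:ℝ) - σ) * K := by
          refine mul_le_mul_of_nonneg_left ?_ (Real.rpow_nonneg (le_of_lt hp0) _)
          exact Summable.tsum_subtype_le _ _ (fun m => Real.rpow_nonneg (Nat.cast_nonneg m) _) hsum2
      _ = (P n : ℝ) ^ (2:ℝ) * K * (P n : ℝ) ^ (-σ) := by
          rw [show (2:ℝ) - σ = 2 + (-σ) by ring, Real.rpow_add hp0]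
          ring

end GolombAux

open GolombAux in
theorem golomb_power (a : ℝ) (ha : 0 < a) (n : ℕ) :
    Tendsto (fun s : ℝ => (1 - Q n (a * s) / zetaR (a * s)) ^ (-1 / s)) atTop
      (nhds ((P n : ℝ) ^ a)) := by
  have hp1 : (1:ℝ) < (P n : ℝ) := by exact_mod_cast (prime_P n).one_lt
  have hp0 : (0:ℝ) < (P n : ℝ) := by linarith
  have hK : 1 ≤ K := one_le_K
  set p : ℝ := (P n : ℝ) with hp
  set C : ℝ := p ^ (2:ℝ) * K with hC
  have hC0 : 0 < C := by positivity
  set F : ℝ → ℝ := fun s => 1 - Q n (a * s) / zetaR (a * s) with hF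
  have hev : ∀ᶠ s : ℝ in atTop, 2 ≤ a * s := by
    filter_upwards [eventually_ge_atTop (2 / a)] with s hs
    rw [div_le_iff₀ ha] at hs
    linarith [mul_comm a s]
  have key : ∀ᶠ s : ℝ in atTop, p ^ (-(a*s)) / K ≤ F s ∧ F s ≤ C * p ^ (-(a*s)) := by
    filter_upwards [hev] with s hs
    obtain ⟨⟨hz1, hzK⟩, hT1, hT2⟩ := sandwich n hs
    have hz0 : 0 < zetaR (a*s) := by linarith
    have hFe : F s = (zetaR (a*s) - Q n (a*s)) / zetaR (a*s) := by
      show 1 - Q n (a*s) / zetaR (a*s) = _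
      rw [sub_div, div_self hz0.ne']
    have hpow0 : 0 ≤ p ^ (-(a*s)) := Real.rpow_nonneg (le_of_lt hp0) _
    constructor
    · rw [hFe]
      exact div_le_div₀ (by linarith) hT1 hz0 hzK
    · rw [hFe]
      calc (zetaR (a*s) - Q n (a*s)) / zetaR (a*s) ≤ zetaR (a*s) - Q n (a*s) :=
            div_le_self (by linarith) hz1
        _ ≤ C * p ^ (-(a*s)) := hT2
  have hFpos : ∀ᶠ s : ℝ in atTop, 0 < F s := by
    filter_upwards [key] with s hs
    have h0 : 0 < p ^ (-(a*s)) / K := by positivity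
    exact lt_of_lt_of_le h0 hs.1
  have hdiv : ∀ c : ℝ, Tendsto (fun s : ℝ => c / s) atTop (nhds 0) :=
    fun c => tendsto_const_nhds.div_atTop tendsto_id
  have hlog : Tendsto (fun s : ℝ => Real.log (F s) * (-1 / s)) atTop
      (nhds (Real.log p * a)) := by
    apply tendsto_of_tendsto_of_tendsto_of_le_of_le'
      (g := fun s : ℝ => Real.log p * a - Real.log C / s)
      (h := fun s : ℝ => Real.log p * a + Real.log K / s)
    · simpa using tendsto_const_nhds.sub (hdiv (Real.log C))
    · simpa using tendsto_const_nhds.add (hdiv (Real.log K))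
    · filter_upwards [key, hFpos, eventually_gt_atTop 0] with s hs hFs hs0
      have hub : Real.log (F s) ≤ Real.log C + (-(a*s)) * Real.log p := by
        have := Real.log_le_log hFs hs.2
        rwa [Real.log_mul (ne_of_gt hC0) (ne_of_gt (Real.rpow_pos_of_pos hp0 _)),
          Real.log_rpow hp0] at this
      have hneg : -1 / s ≤ 0 := le_of_lt (div_neg_of_neg_of_pos (by norm_num) hs0)
      have h2 := mul_le_mul_of_nonpos_right hub hneg
      have heq : (Real.log C + -(a*s) * Real.log p) * (-1/s)
          = Real.log p * a - Real.log C / s := by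
        field_simp
        ring
      rw [heq] at h2
      exact h2
    · filter_upwards [key, hFpos, eventually_gt_atTop 0] with s hs hFs hs0
      have hK0 : (0:ℝ) < K := by linarith
      have hlb : -(a*s) * Real.log p - Real.log K ≤ Real.log (F s) := by
        have h0 : (0:ℝ) < p ^ (-(a*s)) / K := by positivity
        have := Real.log_le_log h0 hs.1
        rwa [Real.log_div (ne_of_gt (Real.rpow_pos_of_pos hp0 _)) (ne_of_gt hK0),
          Real.log_rpow hp0] at this
      have hneg : -1 / s ≤ 0 := le_of_lt (div_neg_of_neg_of_pos (by norm_num) hs0)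
      have h2 := mul_le_mul_of_nonpos_right hlb hneg
      have heq : (-(a*s) * Real.log p - Real.log K) * (-1/s)
          = Real.log p * a + Real.log K / s := by
        field_simp
        ring
      rw [heq] at h2
      exact h2
  have hexp := (Real.continuous_exp.tendsto _).comp hlog
  rw [show (P n : ℝ) ^ a = Real.exp (Real.log p * a) from Real.rpow_def_of_pos hp0 a]
  refine hexp.congr' ?_
  filter_upwards [hFpos] with s hFs
  exact (Real.rpow_def_of_pos hFs _).symm
end

section
/- The limit as real s → ∞ of (ζ(3s) - (1 - 2^{-3s})^{-1})^{-1/s} equals 27. -/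
open Filter Real

namespace CubeAux

def S : Set ℕ := Set.range (fun k : ℕ => 2 ^ k)

lemma summable_f {t : ℝ} (ht : 1 < t) : Summable (fun m : ℕ => (m : ℝ) ^ (-t)) :=
  Real.summable_nat_rpow.2 (by linarith)

lemma geom {t : ℝ} (ht : 0 < t) :
    ∑' k : ℕ, ((2 ^ k : ℕ) : ℝ) ^ (-t) = (1 - (2 : ℝ) ^ (-t))⁻¹ := by
  have h1 : ∀ k : ℕ, ((2 ^ k : ℕ) : ℝ) ^ (-t) = ((2 : ℝ) ^ (-t)) ^ k := by
    intro k
    rw [Nat.cast_pow, Nat.cast_ofNat, ← Real.rpow_natCast (2 : ℝ) k,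
      ← Real.rpow_mul (by norm_num), mul_comm, Real.rpow_mul (by norm_num),
      Real.rpow_natCast]
  simp_rw [h1]
  exact tsum_geometric_of_lt_one (Real.rpow_nonneg (by norm_num) _)
    (Real.rpow_lt_one_of_one_lt_of_neg (by norm_num) (by linarith))

lemma g_eq {t : ℝ} (ht : 1 < t) :
    zetaR t - (1 - (2 : ℝ) ^ (-t))⁻¹ = ∑' x : ↥Sᶜ, ((x : ℕ) : ℝ) ^ (-t) := by
  have hsum := summable_f ht
  have hS : ∑' x : ↥S, ((x : ℕ) : ℝ) ^ (-t) = (1 - (2 : ℝ) ^ (-t))⁻¹ := by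
    rw [show (∑' x : ↥S, ((x : ℕ) : ℝ) ^ (-t)) =
        ∑' k : ℕ, ((2 ^ k : ℕ) : ℝ) ^ (-t) from
      tsum_range (fun m : ℕ => (m : ℝ) ^ (-t)) (Nat.pow_right_injective le_rfl)]
    exact geom (by linarith)
  have h := Summable.tsum_add_tsum_compl (f := fun m : ℕ => (m : ℝ) ^ (-t)) (s := S)
    (hsum.subtype S) (hsum.subtype Sᶜ)
  rw [zetaR, ← h, hS]; ring

lemma three_not_mem : (3 : ℕ) ∉ S := by
  rintro ⟨k, hk⟩
  match k with
  | 0 => simp at hk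
  | 1 => simp at hk
  | (k + 2) =>
    have h1 : 1 ≤ 2 ^ k := Nat.one_le_two_pow
    have h2 : 2 ^ (k + 2) = 2 ^ k * 4 := by ring
    simp only [] at hk
    omega

lemma g_lower {t : ℝ} (ht : 1 < t) :
    (3 : ℝ) ^ (-t) ≤ zetaR t - (1 - (2 : ℝ) ^ (-t))⁻¹ := by
  rw [g_eq ht]
  have hsum := (summable_f ht).subtype Sᶜ
  have := hsum.le_tsum (⟨3, three_not_mem⟩ : ↥Sᶜ)
    (fun j _ => Real.rpow_nonneg (Nat.cast_nonneg _) _)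
  refine le_trans (le_of_eq ?_) this
  norm_num

noncomputable def C : ℝ := 16 * ∑' i : ℕ, ((i : ℝ) + 4) ^ (-2 : ℝ)

lemma summable_shift : Summable (fun i : ℕ => ((i : ℝ) + 4) ^ (-2 : ℝ)) := by
  have h0 : Summable (fun n : ℕ => (n : ℝ) ^ (-2 : ℝ)) :=
    Real.summable_nat_rpow.2 (by norm_num)
  have h := (summable_nat_add_iff 4).2 h0
  refine h.congr fun i => ?_
  push_cast
  ring_nf

lemma g_upper {t : ℝ} (ht : 2 ≤ t) :
    zetaR t - (1 - (2 : ℝ) ^ (-t))⁻¹ ≤ (3 : ℝ) ^ (-t) + C * (4 : ℝ) ^ (-t) := by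
  have ht1 : (1 : ℝ) < t := by linarith
  rw [g_eq ht1]
  have hsum := summable_f ht1
  set h : ℕ → ℝ := fun m => if m < 3 then 0 else (m : ℝ) ^ (-t) with hh
  have hhsum : Summable h := by
    apply Summable.of_nonneg_of_le _ _ hsum
    · intro m; by_cases hm : m < 3 <;>
        simp [hh, hm, Real.rpow_nonneg (Nat.cast_nonneg m)]
    · intro m; by_cases hm : m < 3 <;>
        simp [hh, hm, Real.rpow_nonneg (Nat.cast_nonneg m)]
  have step1 : (∑' x : ↥Sᶜ, ((x : ℕ) : ℝ) ^ (-t)) ≤ ∑' m, h m := by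
    rw [tsum_subtype Sᶜ (fun m : ℕ => (m : ℝ) ^ (-t))]
    refine Summable.tsum_le_tsum ?_ (hsum.indicator _) hhsum
    intro m
    by_cases hm : m ∈ Sᶜ
    · rw [Set.indicator_of_mem hm]
      match m with
      | 0 =>
        have hne : -t ≠ 0 := by intro h0; rw [neg_eq_zero] at h0; linarith
        simp [hh, Real.zero_rpow hne]
      | 1 => exact absurd (⟨0, rfl⟩ : (1 : ℕ) ∈ S) hm
      | 2 => exact absurd (⟨1, rfl⟩ : (2 : ℕ) ∈ S) hm
      | (m + 3) => simp [hh]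
    · rw [Set.indicator_of_notMem hm]
      by_cases hm3 : m < 3 <;> simp [hh, hm3, Real.rpow_nonneg (Nat.cast_nonneg m)]
  have step2 : ∑' m, h m = ∑' i : ℕ, ((i : ℝ) + 3) ^ (-t) := by
    rw [← Summable.sum_add_tsum_nat_add 3 hhsum]
    rw [show ∑ i ∈ Finset.range 3, h i = 0 by
      simp [hh, Finset.sum_range_succ], zero_add]
    refine tsum_congr fun i => ?_
    simp [hh, Nat.not_lt.2 (by omega : 3 ≤ i + 3)]
  have step3 : (∑' i : ℕ, ((i : ℝ) + 3) ^ (-t)) =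
      (3 : ℝ) ^ (-t) + ∑' i : ℕ, ((i : ℝ) + 4) ^ (-t) := by
    have hsum3 : Summable (fun i : ℕ => ((i : ℝ) + 3) ^ (-t)) := by
      have := (summable_nat_add_iff 3).2 hsum
      refine this.congr fun i => ?_
      push_cast; ring_nf
    rw [Summable.tsum_eq_zero_add hsum3]
    norm_num
    exact tsum_congr fun i => by ring_nf
  have step4 : (∑' i : ℕ, ((i : ℝ) + 4) ^ (-t)) ≤ C * (4 : ℝ) ^ (-t) := by
    have hpt : ∀ i : ℕ, ((i : ℝ) + 4) ^ (-t) ≤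
        ((i : ℝ) + 4) ^ (-2 : ℝ) * ((4 : ℝ) ^ (2 - t)) := by
      intro i
      have hx : (0 : ℝ) < (i : ℝ) + 4 := by positivity
      have : ((i : ℝ) + 4) ^ (-t) = ((i : ℝ) + 4) ^ (-2 : ℝ) * ((i : ℝ) + 4) ^ (2 - t) := by
        rw [← Real.rpow_add hx]; ring_nf
      rw [this]
      refine mul_le_mul_of_nonneg_left ?_ (Real.rpow_nonneg hx.le _)
      exact Real.rpow_le_rpow_of_nonpos (by norm_num)
        (by linarith [Nat.cast_nonneg (α := ℝ) i]) (by linarith)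
    have hsum4 : Summable (fun i : ℕ => ((i : ℝ) + 4) ^ (-2 : ℝ) * ((4 : ℝ) ^ (2 - t))) :=
      summable_shift.mul_right _
    have hsumt : Summable (fun i : ℕ => ((i : ℝ) + 4) ^ (-t)) := by
      have := (summable_nat_add_iff 4).2 hsum
      refine this.congr fun i => ?_
      push_cast; ring_nf
    calc (∑' i : ℕ, ((i : ℝ) + 4) ^ (-t))
        ≤ ∑' i : ℕ, ((i : ℝ) + 4) ^ (-2 : ℝ) * ((4 : ℝ) ^ (2 - t)) :=
          Summable.tsum_le_tsum hpt hsumt hsum4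
      _ = (∑' i : ℕ, ((i : ℝ) + 4) ^ (-2 : ℝ)) * ((4 : ℝ) ^ (2 - t)) := tsum_mul_right
      _ = C * (4 : ℝ) ^ (-t) := by
          rw [C, show (2 - t) = 2 + (-t) by ring, Real.rpow_add (by norm_num)]
          rw [show (4 : ℝ) ^ (2 : ℝ) = 16 by
            rw [show (2 : ℝ) = ((2 : ℕ) : ℝ) by norm_num, Real.rpow_natCast]; norm_num]
          ring
  calc (∑' x : ↥Sᶜ, ((x : ℕ) : ℝ) ^ (-t)) ≤ ∑' m, h m := step1
    _ = (3 : ℝ) ^ (-t) + ∑' i : ℕ, ((i : ℝ) + 4) ^ (-t) := by rw [step2, step3]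
    _ ≤ (3 : ℝ) ^ (-t) + C * (4 : ℝ) ^ (-t) := by linarith

lemma C_nonneg : 0 ≤ C := by
  rw [C]
  have : 0 ≤ ∑' i : ℕ, ((i : ℝ) + 4) ^ (-2 : ℝ) :=
    tsum_nonneg fun i => Real.rpow_nonneg (by positivity) _
  linarith

lemma key_alg {s : ℝ} : (3 : ℝ) ^ (-(3 * s)) * ((27 : ℝ) / 64) ^ s = (4 : ℝ) ^ (-(3 * s)) := by
  have h27 : ((27 : ℝ)) ^ s = (3 : ℝ) ^ (3 * s) := by
    rw [show (27 : ℝ) = (3 : ℝ) ^ (3 : ℝ) by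
        rw [show (3:ℝ) = ((3:ℕ):ℝ) from by norm_num, Real.rpow_natCast]; norm_num,
      ← Real.rpow_mul (by norm_num)]
  have h64 : ((64 : ℝ)) ^ s = (4 : ℝ) ^ (3 * s) := by
    rw [show (64 : ℝ) = (4 : ℝ) ^ (3 : ℝ) by
        rw [show (3:ℝ) = ((3:ℕ):ℝ) from by norm_num, Real.rpow_natCast]; norm_num,
      ← Real.rpow_mul (by norm_num)]
  rw [Real.div_rpow (by norm_num) (by norm_num), h27, h64, div_eq_mul_inv,
    ← mul_assoc, ← Real.rpow_add (by norm_num : (0:ℝ) < 3), neg_add_cancel,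
    Real.rpow_zero, one_mul, ← Real.rpow_neg (by norm_num)]

end CubeAux

open CubeAux in
theorem cube_of_three_limit :
    Tendsto (fun s : ℝ => (zetaR (3 * s) - (1 - (2 : ℝ) ^ (-(3 * s)))⁻¹) ^ (-1 / s)) atTop
      (nhds 27) := by
  set f : ℝ → ℝ := fun s => (zetaR (3 * s) - (1 - (2 : ℝ) ^ (-(3 * s)))⁻¹) ^ (-1 / s) with hf
  set L : ℝ → ℝ := fun s => 27 * (1 + C * ((27 : ℝ) / 64) ^ s) ^ (-1 / s) with hL
  have h27pow : ∀ s : ℝ, 1 ≤ s → ((3 : ℝ) ^ (-(3 * s))) ^ (-1 / s) = 27 := by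
    intro s hs
    have hs0 : s ≠ 0 := by linarith
    rw [← Real.rpow_mul (by norm_num)]
    rw [show (-(3 * s)) * (-1 / s) = 3 by field_simp]
    rw [show (3:ℝ) = ((3:ℕ):ℝ) from by norm_num, Real.rpow_natCast]; norm_num
  have hLtendsto : Tendsto L atTop (nhds 27) := by
    have hq : Tendsto (fun s : ℝ => C * ((27 : ℝ) / 64) ^ s) atTop (nhds 0) := by
      have := (tendsto_rpow_atTop_of_base_lt_one ((27 : ℝ) / 64) (by norm_num)
        (by norm_num)).const_mul C
      simpa using this
    have hexp : Tendsto (fun s : ℝ => -1 / s) atTop (nhds 0) :=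
      tendsto_const_nhds.div_atTop tendsto_id
    have hpair : Tendsto (fun s : ℝ => ((1 + C * ((27 : ℝ) / 64) ^ s, -1 / s) : ℝ × ℝ))
        atTop (nhds ((1 : ℝ), (0 : ℝ))) := by
      have := (tendsto_const_nhds (x := (1:ℝ)) (f := atTop)).add hq
      simpa using this.prodMk_nhds hexp
    have hcont : ContinuousAt (fun p : ℝ × ℝ => p.1 ^ p.2) ((1 : ℝ), (0 : ℝ)) :=
      Real.continuousAt_rpow _ (Or.inl one_ne_zero)
    have hB := hcont.tendsto.comp hpair
    simp only [Function.comp_def, Real.rpow_zero] at hB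
    have := hB.const_mul (27 : ℝ)
    simpa [hL, mul_comm] using this
  refine tendsto_of_tendsto_of_tendsto_of_le_of_le' hLtendsto tendsto_const_nhds ?_ ?_
  · -- L ≤ f eventually
    filter_upwards [eventually_ge_atTop (1 : ℝ)] with s hs
    have ht2 : (2 : ℝ) ≤ 3 * s := by linarith
    have ht1 : (1 : ℝ) < 3 * s := by linarith
    have hlow := g_lower ht1
    have hup := g_upper ht2
    have hgpos : 0 < zetaR (3 * s) - (1 - (2 : ℝ) ^ (-(3 * s)))⁻¹ :=
      lt_of_lt_of_le (by positivity) hlow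
    have hub : zetaR (3 * s) - (1 - (2 : ℝ) ^ (-(3 * s)))⁻¹ ≤
        (3 : ℝ) ^ (-(3 * s)) * (1 + C * ((27 : ℝ) / 64) ^ s) := by
      have : (3 : ℝ) ^ (-(3 * s)) * (1 + C * ((27 : ℝ) / 64) ^ s) =
          (3 : ℝ) ^ (-(3 * s)) + C * (4 : ℝ) ^ (-(3 * s)) := by
        have hk := key_alg (s := s)
        linear_combination C * hk
      rw [this]; exact hup
    have hmono : ((3 : ℝ) ^ (-(3 * s)) * (1 + C * ((27 : ℝ) / 64) ^ s)) ^ (-1 / s) ≤ f s := by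
      apply Real.rpow_le_rpow_of_nonpos hgpos hub
      rw [div_nonpos_iff]
      right
      exact ⟨by norm_num, by linarith⟩
    refine le_trans (le_of_eq ?_) hmono
    rw [Real.mul_rpow (Real.rpow_nonneg (by norm_num) _)
      (add_nonneg zero_le_one (mul_nonneg C_nonneg (Real.rpow_nonneg (by norm_num) s))),
      h27pow s hs, hL]
  · -- f ≤ 27 eventually
    filter_upwards [eventually_ge_atTop (1 : ℝ)] with s hs
    have ht1 : (1 : ℝ) < 3 * s := by linarith
    have hlow := g_lower ht1
    have h3pos : (0:ℝ) < (3 : ℝ) ^ (-(3 * s)) := by positivity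
    have hneg : -1 / s ≤ 0 := by rw [div_nonpos_iff]; right; exact ⟨by norm_num, by linarith⟩
    have hkey : ((zetaR (3 * s) - (1 - (2:ℝ) ^ (-(3 * s)))⁻¹) : ℝ) ^ (-1 / s) ≤
        ((3 : ℝ) ^ (-(3 * s))) ^ (-1 / s) :=
      Real.rpow_le_rpow_of_nonpos h3pos hlow hneg
    calc f s ≤ ((3 : ℝ) ^ (-(3 * s))) ^ (-1 / s) := hkey
      _ = 27 := h27pow s hs
end

section
/- For every integer n ≥ 0 and real a > 0, the limit as real s → ∞ of (Q_n'(as)/Q_n(as) - ζ'(as)/ζ(as))^{-1/s} equals p_{n+1}^a. -/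
open Filter Real

-- indicator of n-rough numbers
noncomputable def cfn (n : ℕ) (m : ℕ) : ℝ :=
  if m ≠ 0 ∧ ∀ k < n, ¬ (P k ∣ m) then 1 else 0

noncomputable def zR (n : ℕ) (s : ℝ) : ℝ := ∑' m : ℕ, cfn n m * (m : ℝ) ^ (-s)

noncomputable def zR' (n : ℕ) (s : ℝ) : ℝ :=
  ∑' m : ℕ, cfn n m * Real.log m * (m : ℝ) ^ (-s)

lemma P_two_le (k : ℕ) : 2 ≤ P k := (P_prime k).two_le

lemma P_lt_P {k n : ℕ} (h : k < n) : P k < P n :=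
  (Nat.nth_lt_nth Nat.infinite_setOf_prime).2 h

lemma cfn_nonneg (n m : ℕ) : 0 ≤ cfn n m := by unfold cfn; split <;> norm_num

lemma cfn_le_one (n m : ℕ) : cfn n m ≤ 1 := by unfold cfn; split <;> norm_num

lemma cfn_zero_eq (n : ℕ) : cfn n 0 = 0 := by simp [cfn]

lemma cfn_one_eq (n : ℕ) : cfn n 1 = 1 := by
  have h : ∀ k, k < n → ¬ (P k ∣ 1) := by
    intro k _ hdvd
    have h1 := Nat.le_of_dvd one_pos hdvd
    have := P_two_le k
    omega
  unfold cfn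
  rw [if_pos ⟨one_ne_zero, h⟩]

lemma cfn_P_self (n : ℕ) : cfn n (P n) = 1 := by
  have h2 : ∀ k < n, ¬ (P k ∣ P n) := by
    intro k hk hdvd
    have := ((Nat.prime_dvd_prime_iff_eq (P_prime k) (P_prime n)).1 hdvd)
    exact absurd this (Nat.ne_of_lt (P_lt_P hk))
  have h0 : P n ≠ 0 := (P_prime n).pos.ne'
  unfold cfn
  rw [if_pos ⟨h0, h2⟩]

-- log bound
lemma log_nat_le (m : ℕ) : Real.log m ≤ 2 * (m : ℝ) ^ ((1:ℝ)/2) := by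
  rcases Nat.eq_zero_or_pos m with h | h
  · simp [h]
  · have hm : (0:ℝ) < m := by exact_mod_cast h
    have h1 : Real.log ((m:ℝ) ^ ((1:ℝ)/2)) ≤ (m:ℝ) ^ ((1:ℝ)/2) - 1 :=
      Real.log_le_sub_one_of_pos (Real.rpow_pos_of_pos hm _)
    have h2 : Real.log ((m:ℝ) ^ ((1:ℝ)/2)) = (1/2) * Real.log m := Real.log_rpow hm _
    nlinarith [Real.rpow_pos_of_pos hm ((1:ℝ)/2)]

lemma summable_logterm : Summable (fun m : ℕ => Real.log m * (m : ℝ) ^ (-(2:ℝ))) := by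
  have hs : Summable (fun m : ℕ => 2 * (m : ℝ) ^ (-(3/2 : ℝ))) :=
    (Real.summable_nat_rpow.2 (by norm_num)).mul_left 2
  refine Summable.of_nonneg_of_le (fun m => ?_) (fun m => ?_) hs
  · exact mul_nonneg (Real.log_natCast_nonneg m) (Real.rpow_nonneg (Nat.cast_nonneg m) _)
  · calc Real.log m * (m : ℝ) ^ (-(2:ℝ))
        ≤ (2 * (m:ℝ) ^ ((1:ℝ)/2)) * (m : ℝ) ^ (-(2:ℝ)) := by
          apply mul_le_mul_of_nonneg_right (log_nat_le m)
            (Real.rpow_nonneg (Nat.cast_nonneg m) _)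
      _ = 2 * (m : ℝ) ^ (-(3/2 : ℝ)) := by
          rw [mul_assoc, ← Real.rpow_add' (Nat.cast_nonneg m) (by norm_num)]
          norm_num

lemma summable_pow {s : ℝ} (hs : 1 < s) : Summable (fun m : ℕ => (m : ℝ) ^ (-s)) :=
  Real.summable_nat_rpow.2 (by linarith)

lemma summable_zR (n : ℕ) {s : ℝ} (hs : 1 < s) :
    Summable (fun m : ℕ => cfn n m * (m : ℝ) ^ (-s)) := by
  refine Summable.of_nonneg_of_le (fun m => mul_nonneg (cfn_nonneg n m)
    (Real.rpow_nonneg (Nat.cast_nonneg m) _)) (fun m => ?_) (summable_pow hs)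
  calc cfn n m * (m:ℝ)^(-s) ≤ 1 * (m:ℝ)^(-s) :=
        mul_le_mul_of_nonneg_right (cfn_le_one n m) (Real.rpow_nonneg (Nat.cast_nonneg m) _)
    _ = (m:ℝ)^(-s) := one_mul _

lemma summable_zR' (n : ℕ) {s : ℝ} (hs : 2 ≤ s) :
    Summable (fun m : ℕ => cfn n m * Real.log m * (m : ℝ) ^ (-s)) := by
  refine Summable.of_nonneg_of_le (fun m => ?_) (fun m => ?_) summable_logterm
  · exact mul_nonneg (mul_nonneg (cfn_nonneg n m) (Real.log_natCast_nonneg m))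
      (Real.rpow_nonneg (Nat.cast_nonneg m) _)
  · rcases Nat.eq_zero_or_pos m with h | h
    · simp [h, cfn_zero_eq]
    · have hm1 : (1:ℝ) ≤ m := by exact_mod_cast h
      have h1 : (m:ℝ)^(-s) ≤ (m:ℝ)^(-(2:ℝ)) :=
        Real.rpow_le_rpow_of_exponent_le hm1 (by linarith)
      calc cfn n m * Real.log m * (m:ℝ)^(-s)
          ≤ 1 * Real.log m * (m:ℝ)^(-(2:ℝ)) := by
            apply mul_le_mul (by
              apply mul_le_mul_of_nonneg_right (cfn_le_one n m) (Real.log_natCast_nonneg m)) h1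
              (Real.rpow_nonneg (Nat.cast_nonneg m) _)
            exact mul_nonneg zero_le_one (Real.log_natCast_nonneg m)
        _ = Real.log m * (m:ℝ)^(-(2:ℝ)) := by ring

lemma hasDerivAt_term (m : ℕ) (hm : 1 ≤ m) (y : ℝ) :
    HasDerivAt (fun t : ℝ => (m:ℝ) ^ (-t)) (-(Real.log m * (m:ℝ) ^ (-y))) y := by
  have hm0 : (0:ℝ) < m := by exact_mod_cast hm
  have h1 : HasDerivAt (fun x : ℝ => (m:ℝ) ^ x) ((m:ℝ) ^ (-y) * Real.log m) (-y) :=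
    (Real.hasStrictDerivAt_const_rpow hm0 (-y)).hasDerivAt
  have h2 : HasDerivAt (fun t : ℝ => -t) (-1) y := (hasDerivAt_id y).neg
  have := h1.comp y h2
  convert this using 1
  exacts [rfl, rfl, rfl, by ring]

lemma hasDerivAt_zR (n : ℕ) {s : ℝ} (hs : 2 < s) :
    HasDerivAt (zR n) (-(zR' n s)) s := by
  have key : HasDerivAt (fun t : ℝ => ∑' m : ℕ, cfn n m * (m:ℝ)^(-t))
      (∑' m : ℕ, (cfn n m * (-(Real.log m * (m:ℝ)^(-s))))) s := by
    refine hasDerivAt_tsum_of_isPreconnected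
      (u := fun m : ℕ => Real.log m * (m:ℝ)^(-(2:ℝ)))
      (g := fun (m : ℕ) (t : ℝ) => cfn n m * (m:ℝ)^(-t))
      (g' := fun (m : ℕ) (y : ℝ) => cfn n m * (-(Real.log m * (m:ℝ)^(-y))))
      summable_logterm isOpen_Ioi isPreconnected_Ioi
      (fun m y hy => ?_) (fun m y hy => ?_)
      (show (3:ℝ) ∈ Set.Ioi (2:ℝ) by norm_num) ?_ hs
    · rcases Nat.eq_zero_or_pos m with h | h
      · subst h; simpa [cfn_zero_eq] using hasDerivAt_const y (0:ℝ)
      · exact (hasDerivAt_term m h y).const_mul (cfn n m)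
    · rcases Nat.eq_zero_or_pos m with h | h
      · subst h; simp [cfn_zero_eq]
      · have hm1 : (1:ℝ) ≤ m := by exact_mod_cast h
        have hy2 : (2:ℝ) ≤ y := le_of_lt hy
        have h1 : (m:ℝ)^(-y) ≤ (m:ℝ)^(-(2:ℝ)) :=
          Real.rpow_le_rpow_of_exponent_le hm1 (by linarith)
        rw [norm_mul, norm_neg, norm_mul]
        rw [Real.norm_eq_abs, Real.norm_eq_abs, Real.norm_eq_abs]
        rw [abs_of_nonneg (cfn_nonneg n m), abs_of_nonneg (Real.log_natCast_nonneg m),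
          abs_of_nonneg (Real.rpow_nonneg (Nat.cast_nonneg m) _)]
        calc cfn n m * (Real.log m * (m:ℝ)^(-y))
            ≤ 1 * (Real.log m * (m:ℝ)^(-(2:ℝ))) := by
              apply mul_le_mul (cfn_le_one n m)
                (mul_le_mul_of_nonneg_left h1 (Real.log_natCast_nonneg m))
                (mul_nonneg (Real.log_natCast_nonneg m)
                  (Real.rpow_nonneg (Nat.cast_nonneg m) _)) zero_le_one
          _ = Real.log m * (m:ℝ)^(-(2:ℝ)) := one_mul _
    · exact summable_zR n (by norm_num : (1:ℝ) < 3)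
  have heq : (∑' m : ℕ, (cfn n m * (-(Real.log m * (m:ℝ)^(-s))))) = -(zR' n s) := by
    unfold zR'
    rw [← tsum_neg]
    exact tsum_congr fun m => by ring
  rw [heq] at key
  exact key

lemma zetaR_eq_zR0 {t : ℝ} (ht : t ≠ 0) : zetaR t = zR 0 t := by
  unfold zetaR zR
  refine tsum_congr fun m => ?_
  rcases Nat.eq_zero_or_pos m with h | h
  · subst h
    simp [cfn_zero_eq, Real.zero_rpow (neg_ne_zero.2 ht)]
  · have : cfn 0 m = 1 := by
      unfold cfn
      rw [if_pos ⟨(by omega : m ≠ 0), fun k hk => absurd hk (Nat.not_lt_zero k)⟩]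
    rw [this, one_mul]

lemma hasDerivAt_zetaR {s : ℝ} (hs : 2 < s) :
    HasDerivAt zetaR (-(zR' 0 s)) s := by
  refine (hasDerivAt_zR 0 hs).congr_of_eventuallyEq ?_
  filter_upwards [eventually_gt_nhds (show (0:ℝ) < s by linarith)] with t ht
  exact zetaR_eq_zR0 (ne_of_gt ht)

lemma cfn_mul_P (n m : ℕ) : cfn n (P n * m) = cfn n m := by
  unfold cfn
  congr 1
  rw [eq_iff_iff]
  have hP0 : P n ≠ 0 := (P_prime n).pos.ne'
  constructor
  · rintro ⟨h0, h1⟩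
    refine ⟨fun hm => h0 (by simp [hm]), fun k hk hdvd => h1 k hk (hdvd.mul_left _)⟩
  · rintro ⟨h0, h1⟩
    refine ⟨by positivity, fun k hk hdvd => ?_⟩
    rcases (Nat.Prime.dvd_mul (P_prime k)).1 hdvd with h | h
    · exact absurd ((Nat.prime_dvd_prime_iff_eq (P_prime k) (P_prime n)).1 h)
        (Nat.ne_of_lt (P_lt_P hk))
    · exact h1 k hk h

lemma cfn_succ_mul_P (n m : ℕ) : cfn (n+1) (P n * m) = 0 := by
  unfold cfn
  rw [if_neg]
  rintro ⟨h0, h1⟩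
  exact h1 n (Nat.lt_succ_self n) ⟨m, rfl⟩

lemma cfn_succ_of_not_dvd {n x : ℕ} (h : ¬ P n ∣ x) : cfn (n+1) x = cfn n x := by
  unfold cfn
  congr 1
  rw [eq_iff_iff]
  constructor
  · rintro ⟨h0, h1⟩; exact ⟨h0, fun k hk => h1 k (hk.trans (Nat.lt_succ_self n))⟩
  · rintro ⟨h0, h1⟩
    refine ⟨h0, fun k hk => ?_⟩
    rcases Nat.lt_succ_iff_lt_or_eq.1 hk with hk' | rfl
    · exact h1 k hk'
    · exact h

lemma zR_succ (n : ℕ) {s : ℝ} (hs : 1 < s) :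
    zR n s - zR (n+1) s = (P n : ℝ) ^ (-s) * zR n s := by
  have hs' := hs
  have hsum1 := summable_zR n hs
  have hsum2 := summable_zR (n+1) hs
  have hL : zR n s - zR (n+1) s
      = ∑' m : ℕ, ((cfn n m - cfn (n+1) m) * (m:ℝ)^(-s)) := by
    unfold zR
    rw [← Summable.tsum_sub hsum1 hsum2]
    exact tsum_congr fun m => by ring
  have hPpos : (0:ℝ) < (P n : ℝ) := by exact_mod_cast (P_prime n).pos
  have hinj : Function.Injective (fun m : ℕ => P n * m) :=
    fun a b hab => by
      have hP0 : P n ≠ 0 := (P_prime n).pos.ne'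
      exact Nat.eq_of_mul_eq_mul_left (P_prime n).pos hab
  have hsupp : Function.support (fun x : ℕ => (cfn n x - cfn (n+1) x) * (x:ℝ)^(-s))
      ⊆ Set.range (fun m : ℕ => P n * m) := by
    intro x hx
    by_contra hxr
    apply hx
    have hdvd : ¬ P n ∣ x := by
      intro ⟨c, hc⟩; exact hxr ⟨c, hc.symm⟩
    show (cfn n x - cfn (n+1) x) * (x:ℝ)^(-s) = 0
    rw [cfn_succ_of_not_dvd hdvd, sub_self, zero_mul]
  have hre := hinj.tsum_eq hsupp
  have hterm : ∀ m : ℕ, (cfn n (P n * m) - cfn (n+1) (P n * m)) * ((P n * m : ℕ):ℝ)^(-s)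
      = (P n : ℝ)^(-s) * (cfn n m * (m:ℝ)^(-s)) := by
    intro m
    rw [cfn_mul_P, cfn_succ_mul_P, sub_zero, Nat.cast_mul,
      Real.mul_rpow (le_of_lt hPpos) (Nat.cast_nonneg m)]
    ring
  calc zR n s - zR (n+1) s = ∑' m : ℕ, ((cfn n m - cfn (n+1) m) * (m:ℝ)^(-s)) := hL
    _ = ∑' m : ℕ, ((cfn n (P n * m) - cfn (n+1) (P n * m)) * ((P n * m : ℕ):ℝ)^(-s)) := hre.symm
    _ = ∑' m : ℕ, (P n : ℝ)^(-s) * (cfn n m * (m:ℝ)^(-s)) := tsum_congr hterm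
    _ = (P n : ℝ)^(-s) * zR n s := by rw [tsum_mul_left]; rfl

lemma one_sub_P_rpow_pos (k : ℕ) {s : ℝ} (hs : 0 < s) : 0 < 1 - (P k : ℝ) ^ (-s) := by
  have h1 : (1:ℝ) < (P k : ℝ) := by exact_mod_cast (P_prime k).one_lt
  have := Real.rpow_lt_one_of_one_lt_of_neg h1 (neg_lt_zero.2 hs)
  linarith

lemma Q_pos (n : ℕ) {s : ℝ} (hs : 0 < s) : 0 < Q n s := by
  unfold Q
  exact Finset.prod_pos fun k _ => inv_pos.2 (one_sub_P_rpow_pos k hs)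

lemma zR_ge_one (n : ℕ) {s : ℝ} (hs : 1 < s) : 1 ≤ zR n s := by
  have h1 : cfn n 1 * ((1:ℕ):ℝ)^(-s) = 1 := by
    rw [cfn_one_eq]; simp
  have := Summable.le_tsum (summable_zR n hs) 1 (fun j _ => mul_nonneg (cfn_nonneg n j)
    (Real.rpow_nonneg (Nat.cast_nonneg j) _))
  rw [h1] at this
  exact this

lemma zetaR_factor (n : ℕ) {s : ℝ} (hs : 1 < s) : zetaR s = Q n s * zR n s := by
  induction n with
  | zero =>
    rw [zetaR_eq_zR0 (by linarith : s ≠ 0)]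
    unfold Q
    simp
  | succ n ih =>
    have hx := one_sub_P_rpow_pos n (by linarith : (0:ℝ) < s)
    have hsucc : zR (n+1) s = (1 - (P n : ℝ)^(-s)) * zR n s := by
      have := zR_succ n hs
      ring_nf
      ring_nf at this
      linarith
    have hQ : Q (n+1) s = Q n s * (1 - (P n : ℝ)^(-s))⁻¹ := by
      unfold Q
      rw [Finset.prod_range_succ]
    rw [hQ, hsucc, ih]
    field_simp

lemma Q_differentiableAt (n : ℕ) {s : ℝ} (hs : 0 < s) : DifferentiableAt ℝ (Q n) s := by
  unfold Q
  apply DifferentiableAt.fun_finsetProd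
  intro k _
  have h1 : HasDerivAt (fun t : ℝ => (P k : ℝ) ^ (-t))
      (-(Real.log (P k) * (P k : ℝ)^(-s))) s :=
    hasDerivAt_term (P k) (P_prime k).one_lt.le s
  have h2 : HasDerivAt (fun t : ℝ => 1 - (P k : ℝ) ^ (-t))
      (-(-(Real.log (P k) * (P k : ℝ)^(-s)))) s := h1.const_sub 1
  exact (h2.inv (ne_of_gt (one_sub_P_rpow_pos k hs))).differentiableAt

lemma key_identity (n : ℕ) {s : ℝ} (hs : 2 < s) :
    deriv (Q n) s / Q n s - deriv zetaR s / zetaR s = zR' n s / zR n s := by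
  have hs1 : (1:ℝ) < s := by linarith
  have hs0 : (0:ℝ) < s := by linarith
  have hQ : HasDerivAt (Q n) (deriv (Q n) s) s := (Q_differentiableAt n hs0).hasDerivAt
  have hZ : HasDerivAt (zR n) (-(zR' n s)) s := hasDerivAt_zR n hs
  have hzeta : HasDerivAt zetaR (deriv (Q n) s * zR n s + Q n s * (-(zR' n s))) s := by
    refine (hQ.mul hZ).congr_of_eventuallyEq ?_
    filter_upwards [eventually_gt_nhds hs1] with t ht using zetaR_factor n ht
  rw [hzeta.deriv, zetaR_factor n hs1]
  have hQ0 : Q n s ≠ 0 := ne_of_gt (Q_pos n hs0)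
  have hZ0 : zR n s ≠ 0 := ne_of_gt (lt_of_lt_of_le one_pos (zR_ge_one n hs1))
  field_simp
  ring

noncomputable def Bc : ℝ := ∑' m : ℕ, Real.log m * (m : ℝ) ^ (-(2:ℝ))

lemma Bc_pos : 0 < Bc := by
  have h2 : (0:ℝ) < Real.log 2 * ((2:ℕ):ℝ) ^ (-(2:ℝ)) := by
    apply mul_pos (Real.log_pos (by norm_num))
    exact Real.rpow_pos_of_pos (by norm_num) _
  have hle := Summable.le_tsum summable_logterm 2 (fun j _ => mul_nonneg (Real.log_natCast_nonneg j)
    (Real.rpow_nonneg (Nat.cast_nonneg j) _))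
  calc (0:ℝ) < Real.log 2 * ((2:ℕ):ℝ) ^ (-(2:ℝ)) := h2
    _ ≤ Bc := by
        simpa [Bc] using hle

lemma zR'_nonneg_terms (n : ℕ) (s : ℝ) (m : ℕ) :
    0 ≤ cfn n m * Real.log m * (m:ℝ)^(-s) :=
  mul_nonneg (mul_nonneg (cfn_nonneg n m) (Real.log_natCast_nonneg m))
    (Real.rpow_nonneg (Nat.cast_nonneg m) _)

lemma zR'_lower (n : ℕ) {s : ℝ} (hs : 2 ≤ s) :
    Real.log (P n) * (P n : ℝ)^(-s) ≤ zR' n s := by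
  have hle := Summable.le_tsum (summable_zR' n hs) (P n) (fun j _ => zR'_nonneg_terms n s j)
  rw [cfn_P_self, one_mul] at hle
  exact hle

lemma rough_ge {n m : ℕ} (h : cfn n m = 1) (hm : m ≠ 1) : P n ≤ m := by
  have hcond : m ≠ 0 ∧ ∀ k < n, ¬ (P k ∣ m) := by
    by_contra hc
    rw [cfn, if_neg hc] at h
    norm_num at h
  obtain ⟨q, hq, hqd⟩ := Nat.exists_prime_and_dvd hm
  have hnth : Nat.nth Nat.Prime (Nat.count Nat.Prime q) = q := Nat.nth_count hq
  set k := Nat.count Nat.Prime q with hk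
  have hkn : ¬ k < n := by
    intro hkn
    exact hcond.2 k hkn (by rw [show P k = q from hnth]; exact hqd)
  have hPn_le : P n ≤ P k := (Nat.nth_le_nth Nat.infinite_setOf_prime).2 (by omega)
  calc P n ≤ P k := hPn_le
    _ = q := hnth
    _ ≤ m := Nat.le_of_dvd (Nat.pos_of_ne_zero hcond.1) hqd

lemma zR'_upper (n : ℕ) {s : ℝ} (hs : 2 ≤ s) :
    zR' n s ≤ ((P n : ℝ)^(2:ℝ) * Bc) * (P n : ℝ)^(-s) := by
  have hPpos : (0:ℝ) < (P n : ℝ) := by exact_mod_cast (P_prime n).pos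
  have hterm : ∀ m : ℕ, cfn n m * Real.log m * (m:ℝ)^(-s)
      ≤ (P n : ℝ)^(-(s-2)) * (Real.log m * (m:ℝ)^(-(2:ℝ))) := by
    intro m
    have hRnn : 0 ≤ (P n : ℝ)^(-(s-2)) * (Real.log m * (m:ℝ)^(-(2:ℝ))) :=
      mul_nonneg (Real.rpow_nonneg hPpos.le _)
        (mul_nonneg (Real.log_natCast_nonneg m) (Real.rpow_nonneg (Nat.cast_nonneg m) _))
    rcases eq_or_ne (cfn n m) 1 with h1 | h1
    · rcases eq_or_ne m 1 with rfl | hm1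
      · simp
      · have hge : P n ≤ m := rough_ge h1 hm1
        have hm0 : (0:ℝ) < m := by
          have := (P_prime n).pos
          exact_mod_cast lt_of_lt_of_le this hge
        have hgeR : (P n : ℝ) ≤ (m:ℝ) := by exact_mod_cast hge
        have hsplit : (m:ℝ)^(-s) = (m:ℝ)^(-(s-2)) * (m:ℝ)^(-(2:ℝ)) := by
          rw [← Real.rpow_add hm0]; ring_nf
        have hcomp : (m:ℝ)^(-(s-2)) ≤ (P n : ℝ)^(-(s-2)) := by
          rw [Real.rpow_neg hm0.le, Real.rpow_neg hPpos.le]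
          apply inv_anti₀ (Real.rpow_pos_of_pos hPpos _)
          exact Real.rpow_le_rpow hPpos.le hgeR (by linarith)
        rw [h1, one_mul, hsplit]
        calc Real.log m * ((m:ℝ)^(-(s-2)) * (m:ℝ)^(-(2:ℝ)))
            ≤ Real.log m * ((P n:ℝ)^(-(s-2)) * (m:ℝ)^(-(2:ℝ))) := by
              apply mul_le_mul_of_nonneg_left _ (Real.log_natCast_nonneg m)
              exact mul_le_mul_of_nonneg_right hcomp (Real.rpow_nonneg (Nat.cast_nonneg m) _)
          _ = (P n : ℝ)^(-(s-2)) * (Real.log m * (m:ℝ)^(-(2:ℝ))) := by ring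
    · have h0 : cfn n m = 0 := by
        rcases (by unfold cfn; split <;> simp : cfn n m = 1 ∨ cfn n m = 0) with h | h
        · exact absurd h h1
        · exact h
      rw [h0, zero_mul, zero_mul]
      exact hRnn
  have hsum := Summable.tsum_le_tsum hterm (summable_zR' n hs) (summable_logterm.mul_left _)
  calc zR' n s ≤ ∑' m : ℕ, (P n : ℝ)^(-(s-2)) * (Real.log m * (m:ℝ)^(-(2:ℝ))) := hsum
    _ = (P n : ℝ)^(-(s-2)) * Bc := by rw [tsum_mul_left]; rfl
    _ = ((P n : ℝ)^(2:ℝ) * Bc) * (P n : ℝ)^(-s) := by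
        rw [show -(s-2) = 2 + (-s) by ring, Real.rpow_add hPpos]
        ring

lemma zR_le_zetaR2 (n : ℕ) {s : ℝ} (hs : 2 ≤ s) : zR n s ≤ zetaR 2 := by
  have h2 : zetaR 2 = ∑' m : ℕ, (m:ℝ)^(-(2:ℝ)) := rfl
  rw [h2]
  apply Summable.tsum_le_tsum _ (summable_zR n (by linarith)) (summable_pow (by norm_num : (1:ℝ) < 2))
  intro m
  rcases Nat.eq_zero_or_pos m with h | h
  · simp [h, cfn_zero_eq]
  · have hm1 : (1:ℝ) ≤ m := by exact_mod_cast h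
    calc cfn n m * (m:ℝ)^(-s) ≤ 1 * (m:ℝ)^(-(2:ℝ)) := by
          apply mul_le_mul (cfn_le_one n m) (Real.rpow_le_rpow_of_exponent_le hm1 (by linarith))
            (Real.rpow_nonneg (Nat.cast_nonneg m) _) zero_le_one
      _ = (m:ℝ)^(-(2:ℝ)) := one_mul _

lemma zetaR2_ge_one : 1 ≤ zetaR 2 := by
  rw [zetaR_eq_zR0 (by norm_num : (2:ℝ) ≠ 0)]
  exact zR_ge_one 0 (by norm_num)

lemma D_bounds (n : ℕ) {t : ℝ} (ht : 2 < t) :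
    (Real.log (P n) / zetaR 2) * (P n : ℝ)^(-t) ≤ zR' n t / zR n t ∧
    zR' n t / zR n t ≤ ((P n : ℝ)^(2:ℝ) * Bc) * (P n : ℝ)^(-t) := by
  have ht2 : (2:ℝ) ≤ t := ht.le
  have ht1 : (1:ℝ) < t := by linarith
  have hZpos : 0 < zR n t := lt_of_lt_of_le one_pos (zR_ge_one n ht1)
  have hZ1 : 1 ≤ zR n t := zR_ge_one n ht1
  have hZ2pos : (0:ℝ) < zetaR 2 := lt_of_lt_of_le one_pos zetaR2_ge_one
  have hnum_nonneg : 0 ≤ zR' n t :=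
    tsum_nonneg (zR'_nonneg_terms n t)
  constructor
  · have h1 : Real.log (P n) * (P n : ℝ)^(-t) / zetaR 2 ≤ zR' n t / zR n t :=
      div_le_div₀ hnum_nonneg (zR'_lower n ht2) hZpos (zR_le_zetaR2 n ht2)
    calc (Real.log (P n) / zetaR 2) * (P n : ℝ)^(-t)
        = Real.log (P n) * (P n : ℝ)^(-t) / zetaR 2 := by ring
      _ ≤ zR' n t / zR n t := h1
  · calc zR' n t / zR n t ≤ zR' n t := div_le_self hnum_nonneg hZ1
      _ ≤ ((P n : ℝ)^(2:ℝ) * Bc) * (P n : ℝ)^(-t) := zR'_upper n ht2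

theorem log_deriv_difference_limit (n : ℕ) (a : ℝ) (ha : 0 < a) :
    Tendsto (fun s : ℝ =>
        (deriv (Q n) (a * s) / Q n (a * s) - deriv zetaR (a * s) / zetaR (a * s)) ^ (-1 / s))
      atTop (nhds ((P n : ℝ) ^ a)) := by
  set pn : ℝ := (P n : ℝ) with hpn
  have hpn1 : (1:ℝ) < pn := by rw [hpn]; exact_mod_cast (P_prime n).one_lt
  have hpn0 : (0:ℝ) < pn := by linarith
  have hL : 0 < Real.log pn := Real.log_pos hpn1
  have hZ2pos : (0:ℝ) < zetaR 2 := lt_of_lt_of_le one_pos zetaR2_ge_one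
  set c1 : ℝ := Real.log pn / zetaR 2 with hc1
  set c2 : ℝ := pn^(2:ℝ) * Bc with hc2
  have hc1pos : 0 < c1 := div_pos hL hZ2pos
  have hc2pos : 0 < c2 := mul_pos (Real.rpow_pos_of_pos hpn0 _) Bc_pos
  set E : ℝ → ℝ := fun s => zR' n (a*s) / zR n (a*s) with hE
  set F : ℝ → ℝ := fun s => (-1/s) * Real.log (E s) with hF
  have h_as : Tendsto (fun s : ℝ => a * s) atTop atTop :=
    Tendsto.const_mul_atTop ha tendsto_id
  have hev : ∀ᶠ s : ℝ in atTop, 0 < s ∧ 2 < a * s :=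
    (eventually_gt_atTop 0).and (h_as.eventually (eventually_gt_atTop 2))
  -- Step A : Tendsto F
  have hconst : Tendsto (fun _ : ℝ => a * Real.log pn) atTop (nhds (a * Real.log pn)) :=
    tendsto_const_nhds
  have hg1 : Tendsto (fun s : ℝ => a * Real.log pn - Real.log c2 * s⁻¹) atTop
      (nhds (a * Real.log pn)) := by
    have := hconst.sub ((tendsto_inv_atTop_zero (𝕜 := ℝ)).const_mul (Real.log c2))
    simpa using this
  have hg2 : Tendsto (fun s : ℝ => a * Real.log pn - Real.log c1 * s⁻¹) atTop
      (nhds (a * Real.log pn)) := by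
    have := hconst.sub ((tendsto_inv_atTop_zero (𝕜 := ℝ)).const_mul (Real.log c1))
    simpa using this
  have hEbounds : ∀ s : ℝ, 0 < s → 2 < a * s →
      c1 * pn^(-(a*s)) ≤ E s ∧ E s ≤ c2 * pn^(-(a*s)) := by
    intro s hs hast
    exact D_bounds n hast
  have hEpos : ∀ s : ℝ, 0 < s → 2 < a * s → 0 < E s := fun s hs hast =>
    lt_of_lt_of_le (mul_pos hc1pos (Real.rpow_pos_of_pos hpn0 _)) (hEbounds s hs hast).1
  have hFbounds : ∀ s : ℝ, 0 < s → 2 < a * s →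
      (a * Real.log pn - Real.log c2 * s⁻¹ ≤ F s ∧
       F s ≤ a * Real.log pn - Real.log c1 * s⁻¹) := by
    intro s hs hast
    obtain ⟨hlo, hhi⟩ := hEbounds s hs hast
    have hEp := hEpos s hs hast
    have hlog_lo : Real.log c1 + (-(a*s)) * Real.log pn ≤ Real.log (E s) := by
      have := Real.log_le_log (mul_pos hc1pos (Real.rpow_pos_of_pos hpn0 _)) hlo
      rwa [Real.log_mul (ne_of_gt hc1pos) (ne_of_gt (Real.rpow_pos_of_pos hpn0 _)),
        Real.log_rpow hpn0] at this
    have hlog_hi : Real.log (E s) ≤ Real.log c2 + (-(a*s)) * Real.log pn := by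
      have := Real.log_le_log hEp hhi
      rwa [Real.log_mul (ne_of_gt hc2pos) (ne_of_gt (Real.rpow_pos_of_pos hpn0 _)),
        Real.log_rpow hpn0] at this
    have hneg : (-1/s) ≤ 0 := by
      apply div_nonpos_of_nonpos_of_nonneg <;> linarith
    constructor
    · have h := mul_le_mul_of_nonpos_left hlog_hi hneg
      have heq : (-1/s) * (Real.log c2 + (-(a*s)) * Real.log pn)
          = a * Real.log pn - Real.log c2 * s⁻¹ := by
        field_simp
        ring
      rw [heq] at h
      exact h
    · have h := mul_le_mul_of_nonpos_left hlog_lo hneg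
      have heq : (-1/s) * (Real.log c1 + (-(a*s)) * Real.log pn)
          = a * Real.log pn - Real.log c1 * s⁻¹ := by
        field_simp
        ring
      rw [heq] at h
      exact h
  have hFt : Tendsto F atTop (nhds (a * Real.log pn)) := by
    apply tendsto_of_tendsto_of_tendsto_of_le_of_le' hg1 hg2
    · filter_upwards [hev] with s hs using (hFbounds s hs.1 hs.2).1
    · filter_upwards [hev] with s hs using (hFbounds s hs.1 hs.2).2
  -- Step B : exp ∘ F
  have hexp : Tendsto (fun s => Real.exp (F s)) atTop (nhds (Real.exp (a * Real.log pn))) :=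
    (Real.continuous_exp.tendsto _).comp hFt
  have hval : Real.exp (a * Real.log pn) = pn ^ a := by
    rw [Real.rpow_def_of_pos hpn0, mul_comm]
  rw [hval] at hexp
  -- Step C : congruence
  refine hexp.congr' ?_
  filter_upwards [hev] with s hs
  obtain ⟨hs0, hast⟩ := hs
  have hkey := key_identity n hast
  have hEp := hEpos s hs0 hast
  rw [Real.rpow_def_of_pos]
  · rw [hkey]
    show Real.exp ((-1/s) * Real.log (E s)) = Real.exp (Real.log (E s) * (-1/s))
    rw [mul_comm]
  · rw [hkey]
    exact hEp
end
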